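/- Burge's doubled identity: for all natural numbers L, M, Σ_{j∈ℤ} (-1)^j q^(j²) [L+M choose L-j]_q [L+M choose L+j]_q = [L+M choose L]_{q²}, where the right side is the Gaussian binomial coefficient in base q². -/

import Mathlib

open LaurentPolynomial Finset

noncomputable section

/-- Gaussian binomial coefficient with natural indices, in base `x`, defined by the
`q`-Pascal recurrence `[n+1, k+1] = [n, k] + x^(k+1) * [n, k+1]`.  It vanishes for `k > n`. -/
def gaussAux (x : LaurentPolynomial ℤ) : ℕ → ℕ → LaurentPolynomial ℤ
  | _, 0 => 1
  | 0, _ + 1 => 0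
  | n + 1, k + 1 => gaussAux x n k + x ^ (k + 1) * gaussAux x n (k + 1)

/-- The Gaussian binomial coefficient `[n choose k]` in base `x`, for integer indices:
it is zero when `n < 0` or `k < 0` (and, by `gaussAux`, also when `k > n`). -/
def qbin (x : LaurentPolynomial ℤ) (n k : ℤ) : LaurentPolynomial ℤ :=
  if 0 ≤ n ∧ 0 ≤ k then gaussAux x n.toNat k.toNat else 0

/-- `(-1)^j` for an integer `j`, as a Laurent polynomial. -/
def m1 (j : ℤ) : LaurentPolynomial ℤ := ((((-1 : ℤˣ) ^ j : ℤˣ) : ℤ) : LaurentPolynomial ℤ)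

lemma gaussAux_zero_right (x : LaurentPolynomial ℤ) (n : ℕ) : gaussAux x n 0 = 1 := by
  cases n <;> rfl

lemma gaussAux_succ (x : LaurentPolynomial ℤ) (n k : ℕ) :
    gaussAux x (n+1) (k+1) = gaussAux x n k + x ^ (k + 1) * gaussAux x n (k + 1) := rfl

lemma gaussAux_eq_zero (x : LaurentPolynomial ℤ) : ∀ n k : ℕ, n < k → gaussAux x n k = 0
  | 0, _ + 1, _ => rfl
  | n + 1, k + 1, h => by
    rw [gaussAux_succ, gaussAux_eq_zero x n k (by omega),
      gaussAux_eq_zero x n (k+1) (by omega)]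
    ring

lemma gaussAux_self (x : LaurentPolynomial ℤ) : ∀ n : ℕ, gaussAux x n n = 1
  | 0 => rfl
  | n + 1 => by
    rw [gaussAux_succ, gaussAux_self x n, gaussAux_eq_zero x n (n+1) (by omega)]
    ring


lemma gaussAux_absorb (x : LaurentPolynomial ℤ) :
    ∀ n k : ℕ, (1 - x ^ (k+1)) * gaussAux x n (k+1) = (1 - x ^ (n - k)) * gaussAux x n k := by
  intro n
  induction n with
  | zero =>
    intro k
    rw [gaussAux_eq_zero x 0 (k+1) (by omega), Nat.zero_sub, pow_zero]
    ring
  | succ n IH =>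
    intro k
    match k with
    | 0 =>
      rw [gaussAux_succ, gaussAux_zero_right, gaussAux_zero_right]
      have h := IH 0
      rw [Nat.sub_zero, gaussAux_zero_right] at h
      have e : x ^ (0+1) * x ^ n = x ^ (n+1-0) := by rw [← pow_add]; congr 1; omega
      linear_combination x ^ (0+1) * h - e
    | k + 1 =>
      rcases le_or_gt n k with hnk | hnk
      · rw [gaussAux_eq_zero x (n+1) (k+1+1) (by omega), show n+1-(k+1) = 0 by omega,
          pow_zero]
        ring
      · rw [gaussAux_succ x n (k+1), gaussAux_succ x n k,
          show x ^ (n+1-(k+1)) = x ^ (n-k) by congr 1; omega]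
        have h1 := IH (k+1)
        have h2 := IH k
        have e1 : x ^ (k+1+1) * x ^ (n-(k+1)) = x ^ (n+1) := by rw [← pow_add]; congr 1; omega
        have e2 : x ^ (k+1) * x ^ (n-k) = x ^ (n+1) := by rw [← pow_add]; congr 1; omega
        linear_combination x ^ (k+1+1) * h1 + h2 + gaussAux x n (k+1) * e2 - gaussAux x n (k+1) * e1

lemma qbin_neg_right (x : LaurentPolynomial ℤ) (n : ℤ) {k : ℤ} (h : k < 0) : qbin x n k = 0 := by
  unfold qbin
  rw [if_neg (by omega)]

lemma qbin_natCast (x : LaurentPolynomial ℤ) (a b : ℕ) :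
    qbin x (a : ℤ) (b : ℤ) = gaussAux x a b := by
  unfold qbin
  rw [if_pos ⟨Int.natCast_nonneg a, Int.natCast_nonneg b⟩, Int.toNat_natCast, Int.toNat_natCast]

lemma qbin_zero_of_lt (x : LaurentPolynomial ℤ) {n k : ℤ} (h : n < k) : qbin x n k = 0 := by
  unfold qbin
  split_ifs with h'
  · exact gaussAux_eq_zero x _ _ (by omega)
  · rfl

lemma qbin_zero_right (x : LaurentPolynomial ℤ) {n : ℤ} (h : 0 ≤ n) : qbin x n 0 = 1 := by
  unfold qbin
  rw [if_pos ⟨h, le_refl 0⟩, Int.toNat_zero, gaussAux_zero_right]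

lemma qbin_self (x : LaurentPolynomial ℤ) {n : ℤ} (h : 0 ≤ n) : qbin x n n = 1 := by
  unfold qbin
  rw [if_pos ⟨h, h⟩, gaussAux_self]

lemma pascal1 (c : ℤ) {n : ℤ} (hn : 1 ≤ n) (k : ℤ) :
    qbin (T c) n k = qbin (T c) (n-1) (k-1) + T (c*k) * qbin (T c) (n-1) k := by
  rcases lt_trichotomy k 0 with hk | hk | hk
  · rw [qbin_neg_right _ _ hk, qbin_neg_right _ _ (show k - 1 < 0 by omega),
      qbin_neg_right _ _ hk]
    ring
  · subst hk
    rw [qbin_zero_right _ (by omega), qbin_neg_right _ _ (show (0:ℤ) - 1 < 0 by norm_num),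
      qbin_zero_right _ (by omega), mul_zero, T_zero]
    ring
  · obtain ⟨a, rfl⟩ : ∃ a : ℕ, n = (a : ℤ) + 1 := ⟨(n-1).toNat, by omega⟩
    obtain ⟨b, rfl⟩ : ∃ b : ℕ, k = (b : ℤ) + 1 := ⟨(k-1).toNat, by omega⟩
    rw [show ((a:ℤ) + 1) - 1 = ((a:ℕ) : ℤ) by ring, show ((b:ℤ) + 1) - 1 = ((b:ℕ) : ℤ) by ring,
      show ((a:ℤ) + 1) = ((a + 1 : ℕ) : ℤ) by push_cast; ring,
      show ((b:ℤ) + 1) = ((b + 1 : ℕ) : ℤ) by push_cast; ring,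
      qbin_natCast, qbin_natCast, qbin_natCast, gaussAux_succ]
    congr 1
    rw [T_pow]
    congr 2
    push_cast
    ring

lemma absorb (c : ℤ) {n : ℤ} (hn : 0 ≤ n) (k : ℤ) :
    (1 - T (c*k)) * qbin (T c) n k = (1 - T (c*(n+1-k))) * qbin (T c) n (k-1) := by
  rcases lt_trichotomy k 0 with hk | hk | hk
  · rw [qbin_neg_right _ _ hk, qbin_neg_right _ _ (show k - 1 < 0 by omega)]
    ring
  · subst hk
    rw [mul_zero, T_zero, qbin_neg_right _ _ (show (0:ℤ) - 1 < 0 by norm_num)]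
    ring
  · rcases lt_or_ge n (k-1) with hnk | hnk
    · rw [qbin_zero_of_lt _ (show n < k by omega), qbin_zero_of_lt _ hnk]
      ring
    · rcases eq_or_lt_of_le hnk with heq | hlt
      · rw [qbin_zero_of_lt _ (show n < k by omega),
          show c * (n + 1 - k) = 0 by rw [show n + 1 - k = 0 by omega, mul_zero], T_zero]
        ring
      · obtain ⟨a, rfl⟩ : ∃ a : ℕ, n = (a : ℤ) := ⟨n.toNat, by omega⟩
        obtain ⟨b, rfl⟩ : ∃ b : ℕ, k = (b : ℤ) + 1 := ⟨(k-1).toNat, by omega⟩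
        have hba : b < a := by omega
        rw [show ((b:ℤ) + 1) - 1 = ((b:ℕ) : ℤ) by ring,
          show ((b:ℤ) + 1) = ((b + 1 : ℕ) : ℤ) by push_cast; ring,
          qbin_natCast, qbin_natCast]
        have h := gaussAux_absorb (T c) a b
        rw [T_pow, T_pow] at h
        rw [show c * ((b + 1 : ℕ) : ℤ) = (((b+1 : ℕ)) : ℤ) * c by ring,
          show c * ((a:ℤ) + 1 - ((b + 1 : ℕ) : ℤ)) = (((a - b : ℕ)) : ℤ) * c by
            have : ((a - b : ℕ) : ℤ) = (a : ℤ) - b := by omega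
            rw [this]; push_cast; ring]
        exact h

lemma pascal2 (c : ℤ) {n : ℤ} (hn : 1 ≤ n) (k : ℤ) :
    qbin (T c) n k = T (c*(n-k)) * qbin (T c) (n-1) (k-1) + qbin (T c) (n-1) k := by
  have h1 := pascal1 c hn k
  have h2 := absorb c (show (0:ℤ) ≤ n - 1 by omega) k
  rw [show c * (n - 1 + 1 - k) = c * (n - k) by ring] at h2
  linear_combination h1 - h2

lemma laurent_two_ne_zero : (2 : LaurentPolynomial ℤ) ≠ 0 := by
  have : ((2 : Polynomial ℤ).toLaurent : LaurentPolynomial ℤ) = 2 := map_ofNat _ 2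
  rw [← this, Polynomial.toLaurent_ne_zero]
  norm_num
lemma half (a : LaurentPolynomial ℤ) (h : a = -a) : a = 0 := by
  have h2 : (2 : LaurentPolynomial ℤ) * a = 0 := by linear_combination h
  exact (mul_eq_zero.mp h2).resolve_left laurent_two_ne_zero
lemma m1_zero : m1 0 = 1 := by simp [m1]
lemma m1_neg (j : ℤ) : m1 (-j) = m1 j := by
  unfold m1
  rw [zpow_neg, Int.units_inv_eq_self]
lemma m1_add_one (j : ℤ) : m1 (j + 1) = -m1 j := by
  unfold m1
  rw [zpow_add_one]
  push_cast
  ring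
lemma m1_neg_one_sub (j : ℤ) : m1 (-1 - j) = -m1 j := by
  rw [show -1 - j = -(j + 1) by ring, m1_neg, m1_add_one]
lemma supp_fin {g : ℤ → LaurentPolynomial ℤ} (B : ℤ) (h : ∀ j : ℤ, B < |j| → g j = 0) :
    (Function.support g).Finite :=
  (Set.finite_Icc (-B) B).subset fun j hj =>
    Set.mem_Icc.2 (abs_le.1 (not_lt.1 fun hB => (Function.mem_support.1 hj) (h j hB)))

lemma base_L0 (M : ℕ) :
    (∑ᶠ j : ℤ, m1 j * T (j ^ 2) * qbin (T 1) (M:ℤ) (-j) * qbin (T 1) (M:ℤ) j) =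
      qbin (T 2) (M:ℤ) 0 := by
  have h : ∀ x : ℤ, x ≠ 0 →
      m1 x * T (x ^ 2) * qbin (T 1) (M:ℤ) (-x) * qbin (T 1) (M:ℤ) x = 0 := by
    intro x hx
    rcases lt_or_gt_of_ne hx with h | h
    · rw [qbin_neg_right _ _ h]; ring
    · rw [qbin_neg_right _ _ (show -x < 0 by omega)]; ring
  rw [finsum_eq_single _ 0 h, m1_zero, show ((0:ℤ) ^ 2) = 0 by norm_num, T_zero, neg_zero,
    qbin_zero_right _ (Int.natCast_nonneg M), qbin_zero_right _ (Int.natCast_nonneg M)]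
  ring

lemma base_M0 (L : ℕ) :
    (∑ᶠ j : ℤ, m1 j * T (j ^ 2) * qbin (T 1) (L:ℤ) ((L:ℤ) - j) * qbin (T 1) (L:ℤ) ((L:ℤ) + j)) =
      qbin (T 2) (L:ℤ) (L:ℤ) := by
  have h : ∀ x : ℤ, x ≠ 0 →
      m1 x * T (x ^ 2) * qbin (T 1) (L:ℤ) ((L:ℤ) - x) * qbin (T 1) (L:ℤ) ((L:ℤ) + x) = 0 := by
    intro x hx
    rcases lt_or_gt_of_ne hx with h | h
    · rw [qbin_zero_of_lt _ (show (L:ℤ) < (L:ℤ) - x by omega)]; ring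
    · rw [qbin_zero_of_lt _ (show (L:ℤ) < (L:ℤ) + x by omega)]; ring
  rw [finsum_eq_single _ 0 h, m1_zero, show ((0:ℤ) ^ 2) = 0 by norm_num, T_zero, sub_zero,
    add_zero, qbin_self _ (Int.natCast_nonneg L), qbin_self _ (Int.natCast_nonneg L)]
  ring

lemma abs_gt_cases {B j : ℤ} (h : B < |j|) : B < j ∨ j < -B := by
  rcases abs_cases j with ⟨he, _⟩ | ⟨he, _⟩ <;> rw [he] at h <;> omega

lemma key : ∀ N L M : ℕ, L + M = N →
    (∑ᶠ j : ℤ, m1 j * T (j ^ 2) *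
        qbin (T 1) (L + M) (L - j) * qbin (T 1) (L + M) (L + j)) =
      qbin (T 2) (L + M) L := by
  intro N
  induction N with
  | zero =>
    intro L M hLM
    obtain rfl : L = 0 := by omega
    obtain rfl : M = 0 := by omega
    simpa using base_L0 0
  | succ N IH =>
    intro L M hLM
    rcases Nat.eq_zero_or_pos L with rfl | hL
    · simpa using base_L0 M
    rcases Nat.eq_zero_or_pos M with rfl | hM
    · simpa using base_M0 L
    have hn : (1:ℤ) ≤ (L:ℤ) + (M:ℤ) := by omega
    have IH1 := IH (L-1) M (by omega)
    have IH2 := IH L (M-1) (by omega)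
    rw [show ((L - 1 : ℕ) : ℤ) = (L:ℤ) - 1 by omega] at IH1
    rw [show (L:ℤ) - 1 + (M:ℤ) = (L:ℤ) + (M:ℤ) - 1 by ring] at IH1
    rw [show ((M - 1 : ℕ) : ℤ) = (M:ℤ) - 1 by omega] at IH2
    rw [show (L:ℤ) + ((M:ℤ) - 1) = (L:ℤ) + (M:ℤ) - 1 by ring] at IH2
    -- pointwise expansion
    have hE : ∀ j : ℤ, m1 j * T (j ^ 2) * qbin (T 1) ((L:ℤ) + (M:ℤ)) ((L:ℤ) - j) * qbin (T 1) ((L:ℤ) + (M:ℤ)) ((L:ℤ) + j) =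
        m1 j * T (j ^ 2 + ((M:ℤ) + j)) * (qbin (T 1) ((L:ℤ) + (M:ℤ) - 1) ((L:ℤ) - j - 1) * qbin (T 1) ((L:ℤ) + (M:ℤ) - 1) ((L:ℤ) + j - 1)) + m1 j * T (j ^ 2) * (qbin (T 1) ((L:ℤ) + (M:ℤ) - 1) ((L:ℤ) - j) * qbin (T 1) ((L:ℤ) + (M:ℤ) - 1) ((L:ℤ) + j - 1)) + m1 j * T (j ^ 2 + ((L:ℤ) + j)) * (qbin (T 1) ((L:ℤ) + (M:ℤ) - 1) ((L:ℤ) - j - 1) * qbin (T 1) ((L:ℤ) + (M:ℤ) - 1) ((L:ℤ) + j)) + T (2 * (L:ℤ)) * (m1 j * T (j ^ 2) * qbin (T 1) ((L:ℤ) + (M:ℤ) - 1) ((L:ℤ) - j) * qbin (T 1) ((L:ℤ) + (M:ℤ) - 1) ((L:ℤ) + j)) := by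
      intro j
      have hY := pascal1 1 hn ((L:ℤ) + j)
      have hX1 := pascal1 1 hn ((L:ℤ) - j)
      have hX2 := pascal2 1 hn ((L:ℤ) - j)
      simp only [one_mul] at hY hX1 hX2
      rw [show (L:ℤ) + (M:ℤ) - ((L:ℤ) - j) = (M:ℤ) + j by ring] at hX2
      have e1 : (T ((j:ℤ) ^ 2) * T ((M:ℤ) + j) : LaurentPolynomial ℤ) = T (j ^ 2 + ((M:ℤ) + j)) := (T_add _ _).symm
      have e2 : (T ((j:ℤ) ^ 2) * T ((L:ℤ) + j) : LaurentPolynomial ℤ) = T (j ^ 2 + ((L:ℤ) + j)) := (T_add _ _).symm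
      have e3 : (T ((L:ℤ) + j) * T ((L:ℤ) - j) : LaurentPolynomial ℤ) = T (2 * (L:ℤ)) := by
        rw [← T_add]; exact congrArg T (by ring)
      linear_combination (m1 j * T (j ^ 2) * qbin (T 1) ((L:ℤ) + (M:ℤ)) ((L:ℤ) - j)) * hY +
        (m1 j * T (j ^ 2) * qbin (T 1) ((L:ℤ) + (M:ℤ) - 1) ((L:ℤ) + j - 1)) * hX2 +
        (m1 j * T (j ^ 2) * T ((L:ℤ) + j) * qbin (T 1) ((L:ℤ) + (M:ℤ) - 1) ((L:ℤ) + j)) * hX1 +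
        (m1 j * qbin (T 1) ((L:ℤ) + (M:ℤ) - 1) ((L:ℤ) - j - 1) * qbin (T 1) ((L:ℤ) + (M:ℤ) - 1) ((L:ℤ) + j - 1)) * e1 +
        (m1 j * qbin (T 1) ((L:ℤ) + (M:ℤ) - 1) ((L:ℤ) - j - 1) * qbin (T 1) ((L:ℤ) + (M:ℤ) - 1) ((L:ℤ) + j)) * e2 +
        (m1 j * T (j ^ 2) * qbin (T 1) ((L:ℤ) + (M:ℤ) - 1) ((L:ℤ) - j) * qbin (T 1) ((L:ℤ) + (M:ℤ) - 1) ((L:ℤ) + j)) * e3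
    -- vanishing lemmas
    have z1 : ∀ j : ℤ, (L:ℤ) + (M:ℤ) + 2 < |j| → m1 j * T (j ^ 2 + ((M:ℤ) + j)) * (qbin (T 1) ((L:ℤ) + (M:ℤ) - 1) ((L:ℤ) - j - 1) * qbin (T 1) ((L:ℤ) + (M:ℤ) - 1) ((L:ℤ) + j - 1)) = 0 := by
      intro j hj
      rcases abs_gt_cases hj with hj | hj
      · rw [qbin_neg_right _ _ (show (L:ℤ) - j - 1 < 0 by omega)]; ring
      · rw [qbin_neg_right _ _ (show (L:ℤ) + j - 1 < 0 by omega)]; ring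

    have z2 : ∀ j : ℤ, (L:ℤ) + (M:ℤ) + 2 < |j| → m1 j * T (j ^ 2) * (qbin (T 1) ((L:ℤ) + (M:ℤ) - 1) ((L:ℤ) - j) * qbin (T 1) ((L:ℤ) + (M:ℤ) - 1) ((L:ℤ) + j - 1)) = 0 := by
      intro j hj
      rcases abs_gt_cases hj with hj | hj
      · rw [qbin_neg_right _ _ (show (L:ℤ) - j < 0 by omega)]; ring
      · rw [qbin_neg_right _ _ (show (L:ℤ) + j - 1 < 0 by omega)]; ring

    have z3 : ∀ j : ℤ, (L:ℤ) + (M:ℤ) + 2 < |j| → m1 j * T (j ^ 2 + ((L:ℤ) + j)) * (qbin (T 1) ((L:ℤ) + (M:ℤ) - 1) ((L:ℤ) - j - 1) * qbin (T 1) ((L:ℤ) + (M:ℤ) - 1) ((L:ℤ) + j)) = 0 := by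
      intro j hj
      rcases abs_gt_cases hj with hj | hj
      · rw [qbin_neg_right _ _ (show (L:ℤ) - j - 1 < 0 by omega)]; ring
      · rw [qbin_neg_right _ _ (show (L:ℤ) + j < 0 by omega)]; ring

    have z4 : ∀ j : ℤ, (L:ℤ) + (M:ℤ) + 2 < |j| → T (2 * (L:ℤ)) * (m1 j * T (j ^ 2) * qbin (T 1) ((L:ℤ) + (M:ℤ) - 1) ((L:ℤ) - j) * qbin (T 1) ((L:ℤ) + (M:ℤ) - 1) ((L:ℤ) + j)) = 0 := by
      intro j hj
      rcases abs_gt_cases hj with hj | hj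
      · rw [qbin_neg_right _ _ (show (L:ℤ) - j < 0 by omega)]; ring
      · rw [qbin_neg_right _ _ (show (L:ℤ) + j < 0 by omega)]; ring

    have zg4 : ∀ j : ℤ, (L:ℤ) + (M:ℤ) + 2 < |j| → m1 j * T (j ^ 2) * qbin (T 1) ((L:ℤ) + (M:ℤ) - 1) ((L:ℤ) - j) * qbin (T 1) ((L:ℤ) + (M:ℤ) - 1) ((L:ℤ) + j) = 0 := by
      intro j hj
      rcases abs_gt_cases hj with hj | hj
      · rw [qbin_neg_right _ _ (show (L:ℤ) - j < 0 by omega)]; ring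
      · rw [qbin_neg_right _ _ (show (L:ℤ) + j < 0 by omega)]; ring

    have zv : ∀ j : ℤ, (L:ℤ) + (M:ℤ) + 2 < |j| → m1 j * T (j ^ 2 + ((M:ℤ) - j)) * (qbin (T 1) ((L:ℤ) + (M:ℤ) - 1) ((L:ℤ) - j - 1) * qbin (T 1) ((L:ℤ) + (M:ℤ) - 1) ((L:ℤ) + j - 1)) = 0 := by
      intro j hj
      rcases abs_gt_cases hj with hj | hj
      · rw [qbin_neg_right _ _ (show (L:ℤ) - j - 1 < 0 by omega)]; ring
      · rw [qbin_neg_right _ _ (show (L:ℤ) + j - 1 < 0 by omega)]; ring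

    have zw : ∀ j : ℤ, (L:ℤ) + (M:ℤ) + 2 < |j| → m1 j * T (j ^ 2) * qbin (T 1) ((L:ℤ) + (M:ℤ) - 1) ((L:ℤ) - 1 - j) * qbin (T 1) ((L:ℤ) + (M:ℤ) - 1) ((L:ℤ) - 1 + j) = 0 := by
      intro j hj
      rcases abs_gt_cases hj with hj | hj
      · rw [qbin_neg_right _ _ (show (L:ℤ) - 1 - j < 0 by omega)]; ring
      · rw [qbin_neg_right _ _ (show (L:ℤ) - 1 + j < 0 by omega)]; ring

    have z12 : ∀ j : ℤ, (L:ℤ) + (M:ℤ) + 2 < |j| → m1 j * T (j ^ 2 + ((M:ℤ) + j)) * (qbin (T 1) ((L:ℤ) + (M:ℤ) - 1) ((L:ℤ) - j - 1) * qbin (T 1) ((L:ℤ) + (M:ℤ) - 1) ((L:ℤ) + j - 1)) + m1 j * T (j ^ 2) * (qbin (T 1) ((L:ℤ) + (M:ℤ) - 1) ((L:ℤ) - j) * qbin (T 1) ((L:ℤ) + (M:ℤ) - 1) ((L:ℤ) + j - 1)) = 0 := by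
      intro j hj; rw [z1 j hj, z2 j hj]; ring
    have z123 : ∀ j : ℤ, (L:ℤ) + (M:ℤ) + 2 < |j| → m1 j * T (j ^ 2 + ((M:ℤ) + j)) * (qbin (T 1) ((L:ℤ) + (M:ℤ) - 1) ((L:ℤ) - j - 1) * qbin (T 1) ((L:ℤ) + (M:ℤ) - 1) ((L:ℤ) + j - 1)) + m1 j * T (j ^ 2) * (qbin (T 1) ((L:ℤ) + (M:ℤ) - 1) ((L:ℤ) - j) * qbin (T 1) ((L:ℤ) + (M:ℤ) - 1) ((L:ℤ) + j - 1)) + m1 j * T (j ^ 2 + ((L:ℤ) + j)) * (qbin (T 1) ((L:ℤ) + (M:ℤ) - 1) ((L:ℤ) - j - 1) * qbin (T 1) ((L:ℤ) + (M:ℤ) - 1) ((L:ℤ) + j)) = 0 := by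
      intro j hj; rw [z12 j hj, z3 j hj]; ring
    have zwt3 : ∀ j : ℤ, (L:ℤ) + (M:ℤ) + 2 < |j| → m1 j * T (j ^ 2) * qbin (T 1) ((L:ℤ) + (M:ℤ) - 1) ((L:ℤ) - 1 - j) * qbin (T 1) ((L:ℤ) + (M:ℤ) - 1) ((L:ℤ) - 1 + j) + m1 j * T (j ^ 2 + ((L:ℤ) + j)) * (qbin (T 1) ((L:ℤ) + (M:ℤ) - 1) ((L:ℤ) - j - 1) * qbin (T 1) ((L:ℤ) + (M:ℤ) - 1) ((L:ℤ) + j)) = 0 := by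
      intro j hj; rw [zw j hj, z3 j hj]; ring
    -- bijections
    have hbneg : Function.Bijective (fun j : ℤ => -j) := by
      constructor
      · intro a b h; dsimp at h; omega
      · intro b; exact ⟨-b, by dsimp; ring⟩
    have hbinv : Function.Bijective (fun j : ℤ => -1 - j) := by
      constructor
      · intro a b h; dsimp at h; omega
      · intro b; exact ⟨-1 - b, by dsimp; ring⟩
    -- sum of t2 equals sum of u
    have r2 : (∑ᶠ j : ℤ, m1 (-j) * T ((-j) ^ 2) * (qbin (T 1) ((L:ℤ) + (M:ℤ) - 1) ((L:ℤ) - (-j)) * qbin (T 1) ((L:ℤ) + (M:ℤ) - 1) ((L:ℤ) + (-j) - 1))) = ∑ᶠ j : ℤ, m1 j * T (j ^ 2) * (qbin (T 1) ((L:ℤ) + (M:ℤ) - 1) ((L:ℤ) - j) * qbin (T 1) ((L:ℤ) + (M:ℤ) - 1) ((L:ℤ) + j - 1)) :=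
      finsum_comp (g := fun j : ℤ => m1 j * T (j ^ 2) * (qbin (T 1) ((L:ℤ) + (M:ℤ) - 1) ((L:ℤ) - j) * qbin (T 1) ((L:ℤ) + (M:ℤ) - 1) ((L:ℤ) + j - 1))) (fun j : ℤ => -j) hbneg
    have ru : ∀ j : ℤ, m1 (-j) * T ((-j) ^ 2) * (qbin (T 1) ((L:ℤ) + (M:ℤ) - 1) ((L:ℤ) - (-j)) * qbin (T 1) ((L:ℤ) + (M:ℤ) - 1) ((L:ℤ) + (-j) - 1)) = m1 j * T (j ^ 2) * (qbin (T 1) ((L:ℤ) + (M:ℤ) - 1) ((L:ℤ) - j - 1) * qbin (T 1) ((L:ℤ) + (M:ℤ) - 1) ((L:ℤ) + j)) := by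
      intro j
      rw [m1_neg, show ((-j:ℤ)) ^ 2 = j ^ 2 by ring,
        show (L:ℤ) - (-j) = (L:ℤ) + j by ring,
        show (L:ℤ) + (-j) - 1 = (L:ℤ) - j - 1 by ring]
      ring
    have hS2 : (∑ᶠ j : ℤ, m1 j * T (j ^ 2) * (qbin (T 1) ((L:ℤ) + (M:ℤ) - 1) ((L:ℤ) - j) * qbin (T 1) ((L:ℤ) + (M:ℤ) - 1) ((L:ℤ) + j - 1))) = ∑ᶠ j : ℤ, m1 j * T (j ^ 2) * (qbin (T 1) ((L:ℤ) + (M:ℤ) - 1) ((L:ℤ) - j - 1) * qbin (T 1) ((L:ℤ) + (M:ℤ) - 1) ((L:ℤ) + j)) :=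
      r2.symm.trans (finsum_congr ru)
    -- sum of t1 equals sum of v
    have r1 : (∑ᶠ j : ℤ, m1 (-j) * T ((-j) ^ 2 + ((M:ℤ) - (-j))) * (qbin (T 1) ((L:ℤ) + (M:ℤ) - 1) ((L:ℤ) - (-j) - 1) * qbin (T 1) ((L:ℤ) + (M:ℤ) - 1) ((L:ℤ) + (-j) - 1))) = ∑ᶠ j : ℤ, m1 j * T (j ^ 2 + ((M:ℤ) - j)) * (qbin (T 1) ((L:ℤ) + (M:ℤ) - 1) ((L:ℤ) - j - 1) * qbin (T 1) ((L:ℤ) + (M:ℤ) - 1) ((L:ℤ) + j - 1)) :=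
      finsum_comp (g := fun j : ℤ => m1 j * T (j ^ 2 + ((M:ℤ) - j)) * (qbin (T 1) ((L:ℤ) + (M:ℤ) - 1) ((L:ℤ) - j - 1) * qbin (T 1) ((L:ℤ) + (M:ℤ) - 1) ((L:ℤ) + j - 1))) (fun j : ℤ => -j) hbneg
    have rv : ∀ j : ℤ, m1 (-j) * T ((-j) ^ 2 + ((M:ℤ) - (-j))) * (qbin (T 1) ((L:ℤ) + (M:ℤ) - 1) ((L:ℤ) - (-j) - 1) * qbin (T 1) ((L:ℤ) + (M:ℤ) - 1) ((L:ℤ) + (-j) - 1)) = m1 j * T (j ^ 2 + ((M:ℤ) + j)) * (qbin (T 1) ((L:ℤ) + (M:ℤ) - 1) ((L:ℤ) - j - 1) * qbin (T 1) ((L:ℤ) + (M:ℤ) - 1) ((L:ℤ) + j - 1)) := by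
      intro j
      rw [m1_neg, show ((-j:ℤ)) ^ 2 + ((M:ℤ) - (-j)) = j ^ 2 + ((M:ℤ) + j) by ring,
        show (L:ℤ) - (-j) - 1 = (L:ℤ) + j - 1 by ring,
        show (L:ℤ) + (-j) - 1 = (L:ℤ) - j - 1 by ring]
      ring
    have hS1 : (∑ᶠ j : ℤ, m1 j * T (j ^ 2 + ((M:ℤ) + j)) * (qbin (T 1) ((L:ℤ) + (M:ℤ) - 1) ((L:ℤ) - j - 1) * qbin (T 1) ((L:ℤ) + (M:ℤ) - 1) ((L:ℤ) + j - 1))) = ∑ᶠ j : ℤ, m1 j * T (j ^ 2 + ((M:ℤ) - j)) * (qbin (T 1) ((L:ℤ) + (M:ℤ) - 1) ((L:ℤ) - j - 1) * qbin (T 1) ((L:ℤ) + (M:ℤ) - 1) ((L:ℤ) + j - 1)) :=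
      (finsum_congr rv).symm.trans r1
    -- sum of t3 vanishes
    have r3 : (∑ᶠ j : ℤ, m1 (-1 - j) * T ((-1 - j) ^ 2 + ((L:ℤ) + (-1 - j))) * (qbin (T 1) ((L:ℤ) + (M:ℤ) - 1) ((L:ℤ) - (-1 - j) - 1) * qbin (T 1) ((L:ℤ) + (M:ℤ) - 1) ((L:ℤ) + (-1 - j)))) = ∑ᶠ j : ℤ, m1 j * T (j ^ 2 + ((L:ℤ) + j)) * (qbin (T 1) ((L:ℤ) + (M:ℤ) - 1) ((L:ℤ) - j - 1) * qbin (T 1) ((L:ℤ) + (M:ℤ) - 1) ((L:ℤ) + j)) :=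
      finsum_comp (g := fun j : ℤ => m1 j * T (j ^ 2 + ((L:ℤ) + j)) * (qbin (T 1) ((L:ℤ) + (M:ℤ) - 1) ((L:ℤ) - j - 1) * qbin (T 1) ((L:ℤ) + (M:ℤ) - 1) ((L:ℤ) + j))) (fun j : ℤ => -1 - j) hbinv
    have rr3 : ∀ j : ℤ, m1 (-1 - j) * T ((-1 - j) ^ 2 + ((L:ℤ) + (-1 - j))) * (qbin (T 1) ((L:ℤ) + (M:ℤ) - 1) ((L:ℤ) - (-1 - j) - 1) * qbin (T 1) ((L:ℤ) + (M:ℤ) - 1) ((L:ℤ) + (-1 - j))) = -(m1 j * T (j ^ 2 + ((L:ℤ) + j)) * (qbin (T 1) ((L:ℤ) + (M:ℤ) - 1) ((L:ℤ) - j - 1) * qbin (T 1) ((L:ℤ) + (M:ℤ) - 1) ((L:ℤ) + j))) := by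
      intro j
      rw [m1_neg_one_sub,
        show ((-1 - j:ℤ)) ^ 2 + ((L:ℤ) + (-1 - j)) = j ^ 2 + ((L:ℤ) + j) by ring,
        show (L:ℤ) - (-1 - j) - 1 = (L:ℤ) + j by ring,
        show (L:ℤ) + (-1 - j) = (L:ℤ) - j - 1 by ring]
      ring
    have hS3 : (∑ᶠ j : ℤ, m1 j * T (j ^ 2 + ((L:ℤ) + j)) * (qbin (T 1) ((L:ℤ) + (M:ℤ) - 1) ((L:ℤ) - j - 1) * qbin (T 1) ((L:ℤ) + (M:ℤ) - 1) ((L:ℤ) + j))) = 0 := by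
      have h := (r3.symm.trans (finsum_congr rr3)).trans (finsum_neg_distrib _)
      exact half _ (by linear_combination h)
    -- u decomposition
    have hu : ∀ j : ℤ, m1 j * T (j ^ 2) * (qbin (T 1) ((L:ℤ) + (M:ℤ) - 1) ((L:ℤ) - j - 1) * qbin (T 1) ((L:ℤ) + (M:ℤ) - 1) ((L:ℤ) + j)) = m1 j * T (j ^ 2) * qbin (T 1) ((L:ℤ) + (M:ℤ) - 1) ((L:ℤ) - 1 - j) * qbin (T 1) ((L:ℤ) + (M:ℤ) - 1) ((L:ℤ) - 1 + j) + m1 j * T (j ^ 2 + ((L:ℤ) + j)) * (qbin (T 1) ((L:ℤ) + (M:ℤ) - 1) ((L:ℤ) - j - 1) * qbin (T 1) ((L:ℤ) + (M:ℤ) - 1) ((L:ℤ) + j)) - m1 j * T (j ^ 2 + ((M:ℤ) - j)) * (qbin (T 1) ((L:ℤ) + (M:ℤ) - 1) ((L:ℤ) - j - 1) * qbin (T 1) ((L:ℤ) + (M:ℤ) - 1) ((L:ℤ) + j - 1)) := by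
      intro j
      have hA := absorb 1 (show (0:ℤ) ≤ (L:ℤ) + (M:ℤ) - 1 by omega) ((L:ℤ) + j)
      rw [show (1:ℤ) * ((L:ℤ) + j) = (L:ℤ) + j by ring,
        show (1:ℤ) * ((L:ℤ) + (M:ℤ) - 1 + 1 - ((L:ℤ) + j)) = (M:ℤ) - j by ring] at hA
      have e5 : (T ((j:ℤ) ^ 2) * T ((L:ℤ) + j) : LaurentPolynomial ℤ) = T (j ^ 2 + ((L:ℤ) + j)) := (T_add _ _).symm
      have e6 : (T ((j:ℤ) ^ 2) * T ((M:ℤ) - j) : LaurentPolynomial ℤ) = T (j ^ 2 + ((M:ℤ) - j)) := (T_add _ _).symm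
      rw [show (L:ℤ) - 1 - j = (L:ℤ) - j - 1 by ring,
        show (L:ℤ) - 1 + j = (L:ℤ) + j - 1 by ring]
      linear_combination (m1 j * T (j ^ 2) * qbin (T 1) ((L:ℤ) + (M:ℤ) - 1) ((L:ℤ) - j - 1)) * hA +
        (m1 j * qbin (T 1) ((L:ℤ) + (M:ℤ) - 1) ((L:ℤ) - j - 1) * qbin (T 1) ((L:ℤ) + (M:ℤ) - 1) ((L:ℤ) + j)) * e5 -
        (m1 j * qbin (T 1) ((L:ℤ) + (M:ℤ) - 1) ((L:ℤ) - j - 1) * qbin (T 1) ((L:ℤ) + (M:ℤ) - 1) ((L:ℤ) + j - 1)) * e6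
    -- distributivity steps
    have d_a : (∑ᶠ j : ℤ, (m1 j * T (j ^ 2 + ((M:ℤ) + j)) * (qbin (T 1) ((L:ℤ) + (M:ℤ) - 1) ((L:ℤ) - j - 1) * qbin (T 1) ((L:ℤ) + (M:ℤ) - 1) ((L:ℤ) + j - 1)) + m1 j * T (j ^ 2) * (qbin (T 1) ((L:ℤ) + (M:ℤ) - 1) ((L:ℤ) - j) * qbin (T 1) ((L:ℤ) + (M:ℤ) - 1) ((L:ℤ) + j - 1)) + m1 j * T (j ^ 2 + ((L:ℤ) + j)) * (qbin (T 1) ((L:ℤ) + (M:ℤ) - 1) ((L:ℤ) - j - 1) * qbin (T 1) ((L:ℤ) + (M:ℤ) - 1) ((L:ℤ) + j)) + T (2 * (L:ℤ)) * (m1 j * T (j ^ 2) * qbin (T 1) ((L:ℤ) + (M:ℤ) - 1) ((L:ℤ) - j) * qbin (T 1) ((L:ℤ) + (M:ℤ) - 1) ((L:ℤ) + j)))) =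
        (∑ᶠ j : ℤ, (m1 j * T (j ^ 2 + ((M:ℤ) + j)) * (qbin (T 1) ((L:ℤ) + (M:ℤ) - 1) ((L:ℤ) - j - 1) * qbin (T 1) ((L:ℤ) + (M:ℤ) - 1) ((L:ℤ) + j - 1)) + m1 j * T (j ^ 2) * (qbin (T 1) ((L:ℤ) + (M:ℤ) - 1) ((L:ℤ) - j) * qbin (T 1) ((L:ℤ) + (M:ℤ) - 1) ((L:ℤ) + j - 1)) + m1 j * T (j ^ 2 + ((L:ℤ) + j)) * (qbin (T 1) ((L:ℤ) + (M:ℤ) - 1) ((L:ℤ) - j - 1) * qbin (T 1) ((L:ℤ) + (M:ℤ) - 1) ((L:ℤ) + j)))) + ∑ᶠ j : ℤ, T (2 * (L:ℤ)) * (m1 j * T (j ^ 2) * qbin (T 1) ((L:ℤ) + (M:ℤ) - 1) ((L:ℤ) - j) * qbin (T 1) ((L:ℤ) + (M:ℤ) - 1) ((L:ℤ) + j)) :=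
      finsum_add_distrib (supp_fin _ z123) (supp_fin _ z4)
    have d_b : (∑ᶠ j : ℤ, (m1 j * T (j ^ 2 + ((M:ℤ) + j)) * (qbin (T 1) ((L:ℤ) + (M:ℤ) - 1) ((L:ℤ) - j - 1) * qbin (T 1) ((L:ℤ) + (M:ℤ) - 1) ((L:ℤ) + j - 1)) + m1 j * T (j ^ 2) * (qbin (T 1) ((L:ℤ) + (M:ℤ) - 1) ((L:ℤ) - j) * qbin (T 1) ((L:ℤ) + (M:ℤ) - 1) ((L:ℤ) + j - 1)) + m1 j * T (j ^ 2 + ((L:ℤ) + j)) * (qbin (T 1) ((L:ℤ) + (M:ℤ) - 1) ((L:ℤ) - j - 1) * qbin (T 1) ((L:ℤ) + (M:ℤ) - 1) ((L:ℤ) + j)))) =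
        (∑ᶠ j : ℤ, (m1 j * T (j ^ 2 + ((M:ℤ) + j)) * (qbin (T 1) ((L:ℤ) + (M:ℤ) - 1) ((L:ℤ) - j - 1) * qbin (T 1) ((L:ℤ) + (M:ℤ) - 1) ((L:ℤ) + j - 1)) + m1 j * T (j ^ 2) * (qbin (T 1) ((L:ℤ) + (M:ℤ) - 1) ((L:ℤ) - j) * qbin (T 1) ((L:ℤ) + (M:ℤ) - 1) ((L:ℤ) + j - 1)))) + ∑ᶠ j : ℤ, m1 j * T (j ^ 2 + ((L:ℤ) + j)) * (qbin (T 1) ((L:ℤ) + (M:ℤ) - 1) ((L:ℤ) - j - 1) * qbin (T 1) ((L:ℤ) + (M:ℤ) - 1) ((L:ℤ) + j)) :=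
      finsum_add_distrib (supp_fin _ z12) (supp_fin _ z3)
    have d_c : (∑ᶠ j : ℤ, (m1 j * T (j ^ 2 + ((M:ℤ) + j)) * (qbin (T 1) ((L:ℤ) + (M:ℤ) - 1) ((L:ℤ) - j - 1) * qbin (T 1) ((L:ℤ) + (M:ℤ) - 1) ((L:ℤ) + j - 1)) + m1 j * T (j ^ 2) * (qbin (T 1) ((L:ℤ) + (M:ℤ) - 1) ((L:ℤ) - j) * qbin (T 1) ((L:ℤ) + (M:ℤ) - 1) ((L:ℤ) + j - 1)))) =
        (∑ᶠ j : ℤ, m1 j * T (j ^ 2 + ((M:ℤ) + j)) * (qbin (T 1) ((L:ℤ) + (M:ℤ) - 1) ((L:ℤ) - j - 1) * qbin (T 1) ((L:ℤ) + (M:ℤ) - 1) ((L:ℤ) + j - 1))) + ∑ᶠ j : ℤ, m1 j * T (j ^ 2) * (qbin (T 1) ((L:ℤ) + (M:ℤ) - 1) ((L:ℤ) - j) * qbin (T 1) ((L:ℤ) + (M:ℤ) - 1) ((L:ℤ) + j - 1)) :=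
      finsum_add_distrib (supp_fin _ z1) (supp_fin _ z2)
    have s_u1 : (∑ᶠ j : ℤ, m1 j * T (j ^ 2) * (qbin (T 1) ((L:ℤ) + (M:ℤ) - 1) ((L:ℤ) - j - 1) * qbin (T 1) ((L:ℤ) + (M:ℤ) - 1) ((L:ℤ) + j))) =
        ∑ᶠ j : ℤ, (m1 j * T (j ^ 2) * qbin (T 1) ((L:ℤ) + (M:ℤ) - 1) ((L:ℤ) - 1 - j) * qbin (T 1) ((L:ℤ) + (M:ℤ) - 1) ((L:ℤ) - 1 + j) + m1 j * T (j ^ 2 + ((L:ℤ) + j)) * (qbin (T 1) ((L:ℤ) + (M:ℤ) - 1) ((L:ℤ) - j - 1) * qbin (T 1) ((L:ℤ) + (M:ℤ) - 1) ((L:ℤ) + j)) - m1 j * T (j ^ 2 + ((M:ℤ) - j)) * (qbin (T 1) ((L:ℤ) + (M:ℤ) - 1) ((L:ℤ) - j - 1) * qbin (T 1) ((L:ℤ) + (M:ℤ) - 1) ((L:ℤ) + j - 1))) := finsum_congr hu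
    have s_u2 : (∑ᶠ j : ℤ, (m1 j * T (j ^ 2) * qbin (T 1) ((L:ℤ) + (M:ℤ) - 1) ((L:ℤ) - 1 - j) * qbin (T 1) ((L:ℤ) + (M:ℤ) - 1) ((L:ℤ) - 1 + j) + m1 j * T (j ^ 2 + ((L:ℤ) + j)) * (qbin (T 1) ((L:ℤ) + (M:ℤ) - 1) ((L:ℤ) - j - 1) * qbin (T 1) ((L:ℤ) + (M:ℤ) - 1) ((L:ℤ) + j)) - m1 j * T (j ^ 2 + ((M:ℤ) - j)) * (qbin (T 1) ((L:ℤ) + (M:ℤ) - 1) ((L:ℤ) - j - 1) * qbin (T 1) ((L:ℤ) + (M:ℤ) - 1) ((L:ℤ) + j - 1)))) =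
        (∑ᶠ j : ℤ, (m1 j * T (j ^ 2) * qbin (T 1) ((L:ℤ) + (M:ℤ) - 1) ((L:ℤ) - 1 - j) * qbin (T 1) ((L:ℤ) + (M:ℤ) - 1) ((L:ℤ) - 1 + j) + m1 j * T (j ^ 2 + ((L:ℤ) + j)) * (qbin (T 1) ((L:ℤ) + (M:ℤ) - 1) ((L:ℤ) - j - 1) * qbin (T 1) ((L:ℤ) + (M:ℤ) - 1) ((L:ℤ) + j)))) - ∑ᶠ j : ℤ, m1 j * T (j ^ 2 + ((M:ℤ) - j)) * (qbin (T 1) ((L:ℤ) + (M:ℤ) - 1) ((L:ℤ) - j - 1) * qbin (T 1) ((L:ℤ) + (M:ℤ) - 1) ((L:ℤ) + j - 1)) :=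
      finsum_sub_distrib (supp_fin _ zwt3) (supp_fin _ zv)
    have s_u3 : (∑ᶠ j : ℤ, (m1 j * T (j ^ 2) * qbin (T 1) ((L:ℤ) + (M:ℤ) - 1) ((L:ℤ) - 1 - j) * qbin (T 1) ((L:ℤ) + (M:ℤ) - 1) ((L:ℤ) - 1 + j) + m1 j * T (j ^ 2 + ((L:ℤ) + j)) * (qbin (T 1) ((L:ℤ) + (M:ℤ) - 1) ((L:ℤ) - j - 1) * qbin (T 1) ((L:ℤ) + (M:ℤ) - 1) ((L:ℤ) + j)))) =
        (∑ᶠ j : ℤ, m1 j * T (j ^ 2) * qbin (T 1) ((L:ℤ) + (M:ℤ) - 1) ((L:ℤ) - 1 - j) * qbin (T 1) ((L:ℤ) + (M:ℤ) - 1) ((L:ℤ) - 1 + j)) + ∑ᶠ j : ℤ, m1 j * T (j ^ 2 + ((L:ℤ) + j)) * (qbin (T 1) ((L:ℤ) + (M:ℤ) - 1) ((L:ℤ) - j - 1) * qbin (T 1) ((L:ℤ) + (M:ℤ) - 1) ((L:ℤ) + j)) :=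
      finsum_add_distrib (supp_fin _ zw) (supp_fin _ z3)
    have s4 : (∑ᶠ j : ℤ, T (2 * (L:ℤ)) * (m1 j * T (j ^ 2) * qbin (T 1) ((L:ℤ) + (M:ℤ) - 1) ((L:ℤ) - j) * qbin (T 1) ((L:ℤ) + (M:ℤ) - 1) ((L:ℤ) + j))) = T (2 * (L:ℤ)) * ∑ᶠ j : ℤ, m1 j * T (j ^ 2) * qbin (T 1) ((L:ℤ) + (M:ℤ) - 1) ((L:ℤ) - j) * qbin (T 1) ((L:ℤ) + (M:ℤ) - 1) ((L:ℤ) + j) :=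
      (mul_finsum _ _).symm
    rw [finsum_congr hE, d_a, d_b, d_c, hS1, hS2, s_u1, s_u2, s_u3, hS3, s4, IH1, IH2,
      pascal1 2 hn (L:ℤ)]
    ring

theorem stmt12 (L M : ℕ) :
    (∑ᶠ j : ℤ, m1 j * T (j ^ 2) *
        qbin (T 1) (L + M) (L - j) * qbin (T 1) (L + M) (L + j)) =
      qbin (T 2) (L + M) L := key (L + M) L M rfl
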